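/- arXiv:0801.1997 — 2 statements merged into one kernel-verified Lean document; each statement's English description precedes it below -/
import Mathlib

section
/- Let L be a Lie algebra over a field of characteristic zero, and let b₁, ..., bₘ ∈ L. Then for any k ∈ {1, ..., m}, the left-normed bracket [[b₁,b₂],...,bₘ] is a linear combination of left-normed brackets of the form [[b_k, b_{l₁}], ..., b_{l_{m-1}}], where (l₁, ..., l_{m-1}) ranges over permutations of {1,...,m} \ {k}. -/
/-- The left-normed bracket `[[x, l₁], l₂], …]`. -/
def leftNormedBracket {L : Type*} [LieRing L] (x : L) (l : List L) : L :=
  l.foldl (fun a c => ⁅a, c⁆) x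

namespace LNBAux

lemma lnb_cons {L : Type*} [LieRing L] (x a : L) (l : List L) :
    leftNormedBracket x (a :: l) = leftNormedBracket ⁅x, a⁆ l := rfl

lemma lnb_append {L : Type*} [LieRing L] (x : L) (l₁ l₂ : List L) :
    leftNormedBracket x (l₁ ++ l₂) = leftNormedBracket (leftNormedBracket x l₁) l₂ :=
  List.foldl_append

lemma lnb_add {L : Type*} [LieRing L] (l : List L) : ∀ x y : L,
    leftNormedBracket (x + y) l = leftNormedBracket x l + leftNormedBracket y l := by
  induction l with
  | nil => intro x y; rfl
  | cons a t ih =>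
      intro x y
      rw [lnb_cons, lnb_cons, lnb_cons, ← ih, add_lie]

lemma lnb_neg {L : Type*} [LieRing L] (l : List L) : ∀ x : L,
    leftNormedBracket (-x) l = -leftNormedBracket x l := by
  induction l with
  | nil => intro x; rfl
  | cons a t ih =>
      intro x
      rw [lnb_cons, lnb_cons, ← ih, neg_lie]

lemma lnb_sub {L : Type*} [LieRing L] (l : List L) (x y : L) :
    leftNormedBracket (x - y) l = leftNormedBracket x l - leftNormedBracket y l := by
  rw [sub_eq_add_neg, lnb_add, lnb_neg, sub_eq_add_neg]

lemma lnb_expand {L : Type*} [LieRing L] (x y z : L) (l₁ l₂ : List L) :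
    leftNormedBracket x (l₁ ++ ⁅y, z⁆ :: l₂) =
      leftNormedBracket x (l₁ ++ y :: z :: l₂) - leftNormedBracket x (l₁ ++ z :: y :: l₂) := by
  rw [lnb_append, lnb_append, lnb_append, lnb_cons, lnb_cons, lnb_cons, lnb_cons, lnb_cons,
    ← lnb_sub]
  congr 1
  rw [lie_lie, ← lie_skew y ⁅_, z⁆]
  abel

/-- lift a permutation along a map -/
lemma exists_perm_map {α β : Type*} [DecidableEq α] (f : α → β) :
    ∀ (l' : List β) (s : List α), l'.Perm (s.map f) → ∃ t : List α, t.Perm s ∧ l' = t.map f := by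
  intro l'
  induction l' with
  | nil =>
      intro s h
      have : s.map f = [] := h.nil_eq.symm
      exact ⟨[], by simp [List.map_eq_nil_iff.mp this], rfl⟩
  | cons a r ih =>
      intro s h
      have ha : a ∈ s.map f := (h.mem_iff).mp (by simp)
      obtain ⟨i, hi, rfl⟩ := List.mem_map.mp ha
      have hs : s.Perm (i :: s.erase i) := List.perm_cons_erase hi
      have h2 : (f i :: r).Perm (f i :: (s.erase i).map f) := by
        simpa using h.trans (hs.map f)
      obtain ⟨t, ht, rfl⟩ := ih (s.erase i) h2.cons_inv
      exact ⟨i :: t, (ht.cons i).trans hs.symm, rfl⟩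

/-- main lemma -/
lemma mem_span_lnb {K L : Type*} [Field K] [LieRing L] [LieAlgebra K L] [DecidableEq L] :
    ∀ (l : List L) (x c : L), c ∈ l →
      leftNormedBracket x l ∈ Submodule.span K
        {z : L | ∃ l' : List L, l'.Perm (x :: l.erase c) ∧ z = leftNormedBracket c l'} := by
  intro l
  induction l with
  | nil => intro x c h; simp at h
  | cons y t ih =>
      intro x c h
      by_cases hy : y = c
      · subst hy
        rw [List.erase_cons_head]
        have : leftNormedBracket x (y :: t) = -leftNormedBracket y (x :: t) := by
          rw [lnb_cons, lnb_cons, ← lie_skew, lnb_neg]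
        rw [this]
        exact neg_mem (Submodule.subset_span ⟨x :: t, List.Perm.refl _, rfl⟩)
      · have hct : c ∈ t := by
          rcases List.mem_cons.mp h with h' | h'
          · exact absurd h'.symm hy
          · exact h'
        rw [List.erase_cons_tail (by simpa using hy)]
        rw [lnb_cons]
        have hspan := ih ⁅x, y⁆ c hct
        refine Submodule.span_le.mpr ?_ hspan
        rintro z ⟨l', hperm, rfl⟩
        have hmem : ⁅x, y⁆ ∈ l' := (hperm.mem_iff).mpr (by simp)
        obtain ⟨l₁, l₂, rfl⟩ := List.append_of_mem hmem
        have hrest : (l₁ ++ l₂).Perm (t.erase c) :=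
          ((List.perm_middle).symm.trans hperm).cons_inv
        rw [lnb_expand]
        refine sub_mem ?_ ?_
        · refine Submodule.subset_span ⟨l₁ ++ x :: y :: l₂, ?_, rfl⟩
          exact List.perm_middle.trans ((List.perm_middle.trans (hrest.cons y)).cons x)
        · refine Submodule.subset_span ⟨l₁ ++ y :: x :: l₂, ?_, rfl⟩
          exact (List.perm_middle.trans ((List.perm_middle.trans (hrest.cons x)).cons y)).trans
            (List.Perm.swap x y _)

end LNBAux

/-- in a Lie algebra over a field of characteristic zero, the
left-normed bracket `[[b₁,b₂],…,bₘ]` is a linear combination of left-normed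
brackets `[[b_k,b_{l₁}],…,b_{l_{m-1}}]`, where `(l₁,…,l_{m-1})` runs over
the permutations of `{1,…,m} \ {k}`. -/
theorem stmt0 {K L : Type*} [Field K] [CharZero K] [LieRing L] [LieAlgebra K L]
    (m : ℕ) (hm : 1 ≤ m) (b : Fin m → L) (k : Fin m) :
    leftNormedBracket (b ⟨0, hm⟩)
        (List.ofFn fun i : Fin (m - 1) => b ⟨i.1 + 1, by have := i.isLt; omega⟩) ∈
      Submodule.span K
        {y : L | ∃ l : List (Fin m),
          l.Perm ((List.finRange m).filter (fun i => i ≠ k)) ∧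
          y = leftNormedBracket (b k) (l.map b)} := by
  classical
  obtain ⟨n, rfl⟩ : ∃ n, m = n + 1 := ⟨m - 1, by omega⟩
  set x : L := b ⟨0, hm⟩ with hx
  set l₀ : List L := List.ofFn fun i : Fin (n + 1 - 1) => b ⟨i.1 + 1, by have := i.isLt; omega⟩
    with hl₀
  set c : L := b k with hc
  have hx0 : x = b 0 := rfl
  have hF : List.ofFn b = x :: l₀ := by
    rw [List.ofFn_succ]
    rfl
  have hfilter : (List.finRange (n + 1)).erase k
      = (List.finRange (n + 1)).filter (fun i => i ≠ k) := by
    rw [(List.nodup_finRange _).erase_eq_filter]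
    congr 1
    funext i
    simp [bne, beq_eq_decide]
  have hkmem : k ∈ List.finRange (n + 1) := List.mem_finRange k
  have hperm1 : (List.ofFn b).Perm (c :: ((List.finRange (n + 1)).erase k).map b) := by
    rw [List.ofFn_eq_map]
    exact (List.perm_cons_erase hkmem).map b
  by_cases hk0 : k = ⟨0, hm⟩
  · -- k is the first index
    have h0 : (⟨0, hm⟩ : Fin (n + 1)) = 0 := by ext; simp
    subst hk0
    refine Submodule.subset_span ?_
    refine ⟨(List.finRange n).map Fin.succ, ?_, ?_⟩
    · rw [← hfilter, h0, List.finRange_succ, List.erase_cons_head]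
    · rw [List.map_map, ← List.ofFn_eq_map]
      rfl
  · -- k is not the first index
    have hcl : c ∈ l₀ := by
      rw [hl₀, List.mem_ofFn]
      refine ⟨⟨k.1 - 1, by have := k.isLt; omega⟩, congrArg b (Fin.ext ?_)⟩
      have hk1 : k.1 ≠ 0 := fun h => hk0 (Fin.ext h)
      simp
      omega
    have hperm2 : (x :: l₀).Perm (c :: x :: l₀.erase c) :=
      (((List.perm_cons_erase hcl).cons x).trans (List.Perm.swap c x _))
    have hperm3 : (((List.finRange (n + 1)).erase k).map b).Perm (x :: l₀.erase c) :=
      ((hperm1.symm.trans (hF ▸ hperm2))).cons_inv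
    have hmain := LNBAux.mem_span_lnb (K := K) l₀ x c hcl
    refine Submodule.span_le.mpr ?_ hmain
    rintro z ⟨l', hperm, rfl⟩
    have hperm4 : l'.Perm ((((List.finRange (n + 1)).filter (fun i => i ≠ k))).map b) := by
      rw [← hfilter]
      exact hperm.trans hperm3.symm
    obtain ⟨t, ht, rfl⟩ := LNBAux.exists_perm_map b l' _ hperm4
    exact Submodule.subset_span ⟨t, ht, rfl⟩
end

section
/- For the free associative algebra A = Aₙ over ℂ on n generators, the image Z of A·[[A,A],A]·A under the quotient map A → A/[A,A] is central in the graded Lie algebra B(A) = ⊕ B_i(A); that is, the bracket map B₁(A) × B_i(A) → B_{i+1}(A) vanishes on Z × B_i(A) for all i ≥ 1. -/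
noncomputable section

/-- The free associative algebra on `n` generators over `ℂ`. -/
abbrev FreeA (n : ℕ) := FreeAlgebra ℂ (Fin n)

/-- The lower central series, with `lcs n 0 = L₁(A) = A`, `lcs n i = L_{i+1}(A)`. -/
def lcs (n : ℕ) : ℕ → Submodule ℂ (FreeA n)
  | 0 => ⊤
  | (i + 1) => Submodule.span ℂ {y : FreeA n | ∃ a : FreeA n, ∃ x ∈ lcs n i, y = a * x - x * a}

/-- The span of the elements `a·[[b,c],d]·e`, i.e. the ideal `A[[A,A],A]A`. -/
def Mspan (n : ℕ) : Submodule ℂ (FreeA n) :=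
  Submodule.span ℂ {y : FreeA n | ∃ a b c e f : FreeA n,
    y = a * ((b * c - c * b) * e - e * (b * c - c * b)) * f}

/-- Commutator with an element of `lcs n i` lies in `lcs n (i+1)`. -/
lemma mem_lcs_succ {n : ℕ} {i : ℕ} {u : FreeA n} (hu : u ∈ lcs n i) (a : FreeA n) :
    a * u - u * a ∈ lcs n (i + 1) := by
  rw [lcs]
  exact Submodule.subset_span ⟨a, u, hu, rfl⟩

lemma lcs_succ_le (n : ℕ) : ∀ i : ℕ, lcs n (i + 1) ≤ lcs n i := by
  intro i
  induction i with
  | zero => exact le_top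
  | succ i ih =>
    rw [lcs, Submodule.span_le]
    rintro y ⟨a, u, hu, rfl⟩
    exact mem_lcs_succ (ih hu) a

lemma comm_mem_lcs_one {n : ℕ} (b c : FreeA n) : b * c - c * b ∈ lcs n 1 := by
  rw [lcs]
  exact Submodule.subset_span ⟨b, c, Submodule.mem_top, rfl⟩

/-- The core multilinear identity: `[[g,[h,w]]·f, x] ∈ L₃`. -/
lemma core_identity (n : ℕ) (g h w f x : FreeA n) :
    ((g * (h * w - w * h) - (h * w - w * h) * g) * f) * x
      - x * ((g * (h * w - w * h) - (h * w - w * h) * g) * f) ∈ lcs n 2 := by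
  have hg : ∀ a b c : FreeA n,
      a * (b * c - c * b) - (b * c - c * b) * a ∈ lcs n 2 :=
    fun a b c => mem_lcs_succ (comm_mem_lcs_one b c) a
  have key : ((g * (h * w - w * h) - (h * w - w * h) * g) * f) * x
      - x * ((g * (h * w - w * h) - (h * w - w * h) * g) * f)
      = ((g*h)*(w*(f*x) - (f*x)*w) - (w*(f*x) - (f*x)*w)*(g*h)) + (g*(h*(w*x*f) - (w*x*f)*h) - (h*(w*x*f) - (w*x*f)*h)*g) - ((g*h)*(w*(x*f) - (x*f)*w) - (w*(x*f) - (x*f)*w)*(g*h)) - (g*(h*(f*x*w) - (f*x*w)*h) - (h*(f*x*w) - (f*x*w)*h)*g) + (g*(h*(x*w*f) - (x*w*f)*h) - (h*(x*w*f) - (x*w*f)*h)*g) - (g*((h*x)*(w*f) - (w*f)*(h*x)) - ((h*x)*(w*f) - (w*f)*(h*x))*g) - (g*(h*(x*f*w) - (x*f*w)*h) - (h*(x*f*w) - (x*f*w)*h)*g) + (g*((h*x)*(f*w) - (f*w)*(h*x)) - ((h*x)*(f*w) - (f*w)*(h*x))*g) - ((g*f)*(h*(w*x) - (w*x)*h)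 - (h*(w*x) - (w*x)*h)*(g*f)) + ((g*f)*((h*w)*x - x*(h*w)) - ((h*w)*x - x*(h*w))*(g*f)) + ((g*f*x)*(h*w - w*h) - (h*w - w*h)*(g*f*x)) - ((g*x)*(h*(w*f) - (w*f)*h) - (h*(w*f) - (w*f)*h)*(g*x)) + ((g*x)*(h*(f*w) - (f*w)*h) - (h*(f*w) - (f*w)*h)*(g*x)) + ((h*g)*(w*(f*x) - (f*x)*w) - (w*(f*x) - (f*x)*w)*(h*g)) - ((h*g)*((w*f)*x - x*(w*f)) - ((w*f)*x - x*(w*f))*(h*g)) - (h*(g*(w*x*f) - (w*x*f)*g) - (g*(w*x*f) - (w*x*f)*g)*h) + ((h*g)*(w*(x*f) - (x*f)*w) - (w*(x*f) - (x*f)*w)*(h*g)) + (h*((g*f)*(w*x) - (w*x)*(g*f)) - ((g*f)*(w*x) - (w*x)*(g*f))*h) - ((h*g*f)*(w*x - x*w) - (w*x - x*w)*(h*g*f)) - ((h*g*x)*(w*f - f*w) - (w*f - f*w)*(h*g*x)) + ((h*w)*(g*(f*x) - (f*x)*g) - (g*(f*x) - (f*x)*g)*(h*w)) - ((h*w)*((g*f)*x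 - x*(g*f)) - ((g*f)*x - x*(g*f))*(h*w)) - ((h*w*f)*(g*x - x*g) - (g*x - x*g)*(h*w*f)) - ((h*f)*(g*(w*x) - (w*x)*g) - (g*(w*x) - (w*x)*g)*(h*f)) + ((h*f)*((g*w)*x - x*(g*w)) - ((g*w)*x - x*(g*w))*(h*f)) + ((h*f*w)*(g*x - x*g) - (g*x - x*g)*(h*f*w)) + ((h*f*x)*(g*w - w*g) - (g*w - w*g)*(h*f*x)) + ((h*x)*(g*(w*f) - (w*f)*g) - (g*(w*f) - (w*f)*g)*(h*x)) - ((h*x*g)*(w*f - f*w) - (w*f - f*w)*(h*x*g)) - ((h*x)*((g*f)*w - w*(g*f)) - ((g*f)*w - w*(g*f))*(h*x)) - ((h*x*w)*(g*f - f*g) - (g*f - f*g)*(h*x*w)) - (w*((g*h)*(f*x) - (f*x)*(g*h)) - ((g*h)*(f*x) - (f*x)*(g*h))*w) - (w*((g*h*f)*x - x*(g*h*f)) - ((g*h*f)*x - x*(g*h*f))*w) + ((w*g*h)*(f*x - x*f) - (f*x - x*f)*(w*g*h)) + (w*((g*h*x)*f - f*(g*h*x)) - ((g*h*x)*f - f*(g*h*x))*w)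 + (w*((g*f*h)*x - x*(g*f*h)) - ((g*f*h)*x - x*(g*f*h))*w) := by
    noncomm_ring
  rw [key]
  exact ((lcs n 2).add_mem ((lcs n 2).add_mem ((lcs n 2).add_mem ((lcs n 2).sub_mem ((lcs n 2).sub_mem ((lcs n 2).sub_mem ((lcs n 2).sub_mem ((lcs n 2).sub_mem ((lcs n 2).add_mem ((lcs n 2).add_mem ((lcs n 2).add_mem ((lcs n 2).add_mem ((lcs n 2).sub_mem ((lcs n 2).sub_mem ((lcs n 2).sub_mem ((lcs n 2).add_mem ((lcs n 2).sub_mem ((lcs n 2).sub_mem ((lcs n 2).add_mem ((lcs n 2).add_mem ((lcs n 2).sub_mem ((lcs n 2).sub_mem ((lcs n 2).add_mem ((lcs n 2).add_mem ((lcs n 2).sub_mem ((lcs n 2).add_mem ((lcs n 2).add_mem ((lcs n 2).sub_mem ((lcs n 2).add_mem ((lcs n 2).sub_mem ((lcs n 2).sub_mem ((lcs n 2).add_mem ((lcs n 2).sub_mem ((lcs n 2).sub_mem ((lcs n 2).add_mem (hg (g*h) w (f*x)) (hg g h (w*x*f))) (hg (g*h) w (x*f))) (hg g h (f*x*w)))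 (hg g h (x*w*f))) (hg g (h*x) (w*f))) (hg g h (x*f*w))) (hg g (h*x) (f*w))) (hg (g*f) h (w*x))) (hg (g*f) (h*w) x)) (hg (g*f*x) h w)) (hg (g*x) h (w*f))) (hg (g*x) h (f*w))) (hg (h*g) w (f*x))) (hg (h*g) (w*f) x)) (hg h g (w*x*f))) (hg (h*g) w (x*f))) (hg h (g*f) (w*x))) (hg (h*g*f) w x)) (hg (h*g*x) w f)) (hg (h*w) g (f*x))) (hg (h*w) (g*f) x)) (hg (h*w*f) g x)) (hg (h*f) g (w*x))) (hg (h*f) (g*w) x)) (hg (h*f*w) g x)) (hg (h*f*x) g w)) (hg (h*x) g (w*f))) (hg (h*x*g) w f)) (hg (h*x) (g*f) w)) (hg (h*x*w) g f)) (hg w (g*h) (f*x))) (hg w (g*h*f) x)) (hg (w*g*h) f x)) (hg w (g*h*x) f)) (hg w (g*f*h) x))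

/-- `[T·f, x] ∈ L₃` for any `T ∈ L₃`. -/
lemma keyT (n : ℕ) {T : FreeA n} (hT : T ∈ lcs n 2) (f x : FreeA n) :
    (T * f) * x - x * (T * f) ∈ lcs n 2 := by
  rw [lcs] at hT
  induction hT using Submodule.span_induction with
  | mem T hTm =>
    obtain ⟨g, u, hu, rfl⟩ := hTm
    rw [lcs] at hu
    induction hu using Submodule.span_induction with
    | mem u hum =>
      obtain ⟨h, w, -, rfl⟩ := hum
      exact core_identity n g h w f x
    | zero =>
      have : ((g * (0:FreeA n) - (0:FreeA n) * g) * f) * x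
          - x * ((g * (0:FreeA n) - (0:FreeA n) * g) * f) = 0 := by noncomm_ring
      rw [this]; exact (lcs n 2).zero_mem
    | add u v hu hv ihu ihv =>
      have : ((g * (u + v) - (u + v) * g) * f) * x - x * ((g * (u + v) - (u + v) * g) * f)
          = (((g * u - u * g) * f) * x - x * ((g * u - u * g) * f))
            + (((g * v - v * g) * f) * x - x * ((g * v - v * g) * f)) := by noncomm_ring
      rw [this]; exact (lcs n 2).add_mem ihu ihv
    | smul c u hu ihu =>
      have : ((g * (c • u) - (c • u) * g) * f) * x - x * ((g * (c • u) - (c • u) * g) * f)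
          = c • (((g * u - u * g) * f) * x - x * ((g * u - u * g) * f)) := by
        simp only [sub_mul, mul_sub, smul_sub, mul_smul_comm, smul_mul_assoc]; try abel
      rw [this]; exact (lcs n 2).smul_mem c ihu
  | zero =>
    have : ((0:FreeA n) * f) * x - x * ((0:FreeA n) * f) = 0 := by noncomm_ring
    rw [this]; exact (lcs n 2).zero_mem
  | add T S hT hS ihT ihS =>
    have : ((T + S) * f) * x - x * ((T + S) * f)
        = ((T * f) * x - x * (T * f)) + ((S * f) * x - x * (S * f)) := by noncomm_ring
    rw [this]; exact (lcs n 2).add_mem ihT ihS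
  | smul c T hT ihT =>
    have : ((c • T) * f) * x - x * ((c • T) * f)
        = c • ((T * f) * x - x * (T * f)) := by
      simp only [sub_mul, mul_sub, smul_sub, mul_smul_comm, smul_mul_assoc]; try abel
    rw [this]; exact (lcs n 2).smul_mem c ihT

/-- The key fact: `[M, A] ⊆ L₃`. -/
lemma keyM (n : ℕ) {z : FreeA n} (hz : z ∈ Mspan n) (x : FreeA n) :
    z * x - x * z ∈ lcs n 2 := by
  rw [Mspan] at hz
  induction hz using Submodule.span_induction with
  | mem z hzm =>
    obtain ⟨a, b, c, e, f, rfl⟩ := hzm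
    set s : FreeA n := b * c - c * b with hs
    have hT0 : (b * c - c * b) * e - e * (b * c - c * b) ∈ lcs n 2 := by
      have h1 : e * s - s * e ∈ lcs n 2 := mem_lcs_succ (comm_mem_lcs_one b c) e
      have h2 := (lcs n 2).neg_mem h1
      rw [neg_sub] at h2
      exact h2
    have hT' : a * ((b * c - c * b) * e - e * (b * c - c * b))
        - ((b * c - c * b) * e - e * (b * c - c * b)) * a ∈ lcs n 2 :=
      lcs_succ_le n 2 (mem_lcs_succ hT0 a)
    have key : (a * ((b * c - c * b) * e - e * (b * c - c * b)) * f) * x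
        - x * (a * ((b * c - c * b) * e - e * (b * c - c * b)) * f)
        = ((((b * c - c * b) * e - e * (b * c - c * b)) * (a * f)) * x
            - x * (((b * c - c * b) * e - e * (b * c - c * b)) * (a * f)))
          + (((a * ((b * c - c * b) * e - e * (b * c - c * b))
              - ((b * c - c * b) * e - e * (b * c - c * b)) * a) * f) * x
            - x * ((a * ((b * c - c * b) * e - e * (b * c - c * b))
              - ((b * c - c * b) * e - e * (b * c - c * b)) * a) * f)) := by
      noncomm_ring
    rw [key]
    exact (lcs n 2).add_mem (keyT n hT0 (a * f) x) (keyT n hT' f x)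
  | zero =>
    have : (0:FreeA n) * x - x * 0 = 0 := by noncomm_ring
    rw [this]; exact (lcs n 2).zero_mem
  | add z w hz hw ihz ihw =>
    have : (z + w) * x - x * (z + w) = (z * x - x * z) + (w * x - x * w) := by noncomm_ring
    rw [this]; exact (lcs n 2).add_mem ihz ihw
  | smul c z hz ihz =>
    have : (c • z) * x - x * (c • z) = c • (z * x - x * z) := by
      simp only [sub_mul, mul_sub, smul_sub, mul_smul_comm, smul_mul_assoc]; try abel
    rw [this]; exact (lcs n 2).smul_mem c ihz

/-- Iterated brackets of `Mspan` with `A`. -/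
def Nser (n : ℕ) : ℕ → Submodule ℂ (FreeA n)
  | 0 => Mspan n
  | (k + 1) => Submodule.span ℂ {y : FreeA n | ∃ m ∈ Nser n k, ∃ a : FreeA n, y = m * a - a * m}

lemma Nser_le_lcs (n : ℕ) : ∀ k : ℕ, Nser n (k + 1) ≤ lcs n (k + 2) := by
  intro k
  induction k with
  | zero =>
    rw [Nser, Submodule.span_le]
    rintro y ⟨m, hm, a, rfl⟩
    exact keyM n hm a
  | succ k ih =>
    rw [Nser, Submodule.span_le]
    rintro y ⟨m, hm, a, rfl⟩
    have h1 := (lcs n (k + 3)).neg_mem (mem_lcs_succ (ih hm) a)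
    rw [neg_sub] at h1
    exact h1

lemma main_induction (n : ℕ) :
    ∀ i k : ℕ, ∀ m ∈ Nser n k, ∀ x ∈ lcs n i, m * x - x * m ∈ lcs n (i + k + 2) := by
  intro i
  induction i with
  | zero =>
    intro k m hm x _
    have h1 : m * x - x * m ∈ Nser n (k + 1) := by
      rw [Nser]; exact Submodule.subset_span ⟨m, hm, x, rfl⟩
    have h2 := Nser_le_lcs n k h1
    simpa using h2
  | succ i ih =>
    intro k m hm x hx
    rw [lcs] at hx
    induction hx using Submodule.span_induction with
    | mem y hy =>
      obtain ⟨a, u, hu, rfl⟩ := hy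
      have hma : m * a - a * m ∈ Nser n (k + 1) := by
        rw [Nser]; exact Submodule.subset_span ⟨m, hm, a, rfl⟩
      have h1 : (m * a - a * m) * u - u * (m * a - a * m) ∈ lcs n (i + (k + 1) + 2) :=
        ih (k + 1) _ hma u hu
      have h2 : m * u - u * m ∈ lcs n (i + k + 2) := ih k m hm u hu
      have h3 : a * (m * u - u * m) - (m * u - u * m) * a ∈ lcs n (i + k + 2 + 1) :=
        mem_lcs_succ h2 a
      have e1 : i + (k + 1) + 2 = i + 1 + k + 2 := by omega
      have e2 : i + k + 2 + 1 = i + 1 + k + 2 := by omega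
      rw [e1] at h1; rw [e2] at h3
      have key : m * (a * u - u * a) - (a * u - u * a) * m
          = ((m * a - a * m) * u - u * (m * a - a * m))
            + (a * (m * u - u * m) - (m * u - u * m) * a) := by noncomm_ring
      rw [key]
      exact (lcs n (i + 1 + k + 2)).add_mem h1 h3
    | zero =>
      have : m * (0:FreeA n) - (0:FreeA n) * m = 0 := by noncomm_ring
      rw [this]; exact (lcs n (i + 1 + k + 2)).zero_mem
    | add y v hy hv ihy ihv =>
      have : m * (y + v) - (y + v) * m = (m * y - y * m) + (m * v - v * m) := by noncomm_ring
      rw [this]; exact (lcs n (i + 1 + k + 2)).add_mem ihy ihv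
    | smul c y hy ihy =>
      have : m * (c • y) - (c • y) * m = c • (m * y - y * m) := by
        simp only [sub_mul, mul_sub, smul_sub, mul_smul_comm, smul_mul_assoc]; try abel
      rw [this]; exact (lcs n (i + 1 + k + 2)).smul_mem c ihy

/-- the image `Z` of `A[[A,A],A]A` in `B₁(A) = A/[A,A]` is central in the
associated graded Lie algebra `B(A)`: the bracket `B₁(A) × B_i(A) → B_{i+1}(A)` vanishes on
`Z × B_i(A)`.  Concretely: for any representative `z ∈ A[[A,A],A]A` and any
`x ∈ L_{i+1}(A) = lcs n i`, the commutator `[z,x]` lies in `L_{i+3}(A) = lcs n (i+2)`. -/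
theorem stmt16 (n : ℕ) (z : FreeA n) (hz : z ∈ Mspan n)
    (i : ℕ) (x : FreeA n) (hx : x ∈ lcs n i) :
    z * x - x * z ∈ lcs n (i + 2) := by
  have h := main_induction n i 0 z hz x hx
  simpa using h
end
end
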